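/- Let U ⊆ ℝ^d be open and L : U × ℝ^m → ℝ of class C², convex in the second variable, uniformly superlinear in the second variable (for every K ≥ 0 there is C(K) ∈ ℝ with L(x,v) ≥ K‖v‖ + C(K) for all x ∈ U, v ∈ ℝ^m), and satisfying sup{ L(x,v) : x ∈ U, ‖v‖ ≤ R } < +∞ for every R > 0. Then for every compact K ⊆ U, every C > 0 and every ε > 0 there exists δ > 0 such that: whenever x ∈ K, y ∈ U with ‖x − y‖ ≤ δ, v ∈ ℝ^m with ‖v‖ ≤ C, and w ∈ ℝ^m is arbitrary, one has L(y,w) ≥ L(x,v) + ∂_v L(x,v)·(w − v) − ε, where ∂_v L(x,v) denotes the derivative of L in the second variable at (x,v). -/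

import Mathlib

open Set

/-- Tangent plane inequality for convex functions. -/
lemma tangent_le_of_convex {F : Type*} [NormedAddCommGroup F] [NormedSpace ℝ F]
    {g : F → ℝ} {g' : F →L[ℝ] ℝ} (hg : ConvexOn ℝ univ g) (v w : F)
    (hd : HasFDerivAt g g' v) : g v + g' (w - v) ≤ g w := by
  rcases eq_or_ne w v with rfl | hne
  · simp
  set φ : ℝ → ℝ := fun t => g (v + t • (w - v)) with hφ
  have hline : ∀ t : ℝ, HasDerivAt (fun s : ℝ => v + s • (w - v)) (w - v) t := by
    intro t
    simpa using ((hasDerivAt_id t).smul_const (w - v)).const_add v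
  have hφconv : ConvexOn ℝ univ φ := by
    have := hg.comp_affineMap (AffineMap.lineMap v w : ℝ →ᵃ[ℝ] F)
    simp only [preimage_univ] at this
    have heq : φ = g ∘ AffineMap.lineMap v w := by
      ext t
      simp [φ, AffineMap.lineMap_apply, add_comm]
    rw [heq]; exact this
  have hφd : HasDerivAt φ (g' (w - v)) 0 := by
    have hd' : HasFDerivAt g g' (v + (0:ℝ) • (w - v)) := by simpa using hd
    exact hd'.comp_hasDerivAt 0 (hline 0)
  have := hφconv.le_slope_of_hasDerivAt (mem_univ 0) (mem_univ 1) one_pos hφd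
  rw [slope_def_field] at this
  simp only [φ, zero_smul, add_zero, one_smul] at this
  have h1 : g (v + (w - v)) = g w := by rw [add_sub_cancel]
  rw [h1] at this
  have : g' (w - v) ≤ g w - g v := by
    calc g' (w - v) ≤ (g w - g v) / (1 - 0) := this
    _ = g w - g v := by norm_num
  linarith

/-- Uniform lower bound by tangent planes (Lemma on convex superlinear
Lagrangians): near a compact set, for bounded base velocities, the Lagrangian dominates
its linearization up to ε. -/
theorem stmt_3 (d m : ℕ) (U : Set (EuclideanSpace ℝ (Fin d))) (hU : IsOpen U)
    (L : EuclideanSpace ℝ (Fin d) → EuclideanSpace ℝ (Fin m) → ℝ)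
    (hC2 : ContDiffOn ℝ 2
      (fun p : EuclideanSpace ℝ (Fin d) × EuclideanSpace ℝ (Fin m) => L p.1 p.2)
      (U ×ˢ (univ : Set (EuclideanSpace ℝ (Fin m)))))
    (hconv : ∀ x ∈ U, ConvexOn ℝ univ (L x))
    (hsl : ∀ K ≥ (0:ℝ), ∃ C : ℝ, ∀ x ∈ U, ∀ v : EuclideanSpace ℝ (Fin m),
      K * ‖v‖ + C ≤ L x v)
    (hbd : ∀ R > (0:ℝ), ∃ A : ℝ, ∀ x ∈ U, ∀ v : EuclideanSpace ℝ (Fin m),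
      ‖v‖ ≤ R → L x v ≤ A) :
    ∀ K : Set (EuclideanSpace ℝ (Fin d)), IsCompact K → K ⊆ U →
    ∀ C > (0:ℝ), ∀ ε > (0:ℝ), ∃ δ > (0:ℝ),
      ∀ x ∈ K, ∀ y ∈ U, ‖x - y‖ ≤ δ →
      ∀ v : EuclideanSpace ℝ (Fin m), ‖v‖ ≤ C →
      ∀ w : EuclideanSpace ℝ (Fin m),
        L x v + (fderiv ℝ (L x) v) (w - v) - ε ≤ L y w := by
  intro K hK hKU C hC ε hε
  have E := 0
  clear E
  let E := EuclideanSpace ℝ (Fin d)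
  let F := EuclideanSpace ℝ (Fin m)
  set Lp : E × F → ℝ := fun p => L p.1 p.2 with hLp
  set Ω : Set (E × F) := U ×ˢ (univ : Set F) with hΩdef
  have hΩ : IsOpen Ω := hU.prod isOpen_univ
  have hdiffOn : DifferentiableOn ℝ Lp Ω := hC2.differentiableOn (by norm_num)
  have hD : ∀ p ∈ Ω, HasFDerivAt Lp (fderiv ℝ Lp p) p := fun p hp =>
    (hdiffOn.differentiableAt (hΩ.mem_nhds hp)).hasFDerivAt
  -- partial derivative in the second variable
  have hpart : ∀ x ∈ U, ∀ v : F,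
      HasFDerivAt (L x) ((fderiv ℝ Lp (x, v)).comp (ContinuousLinearMap.inr ℝ E F)) v := by
    intro x hx v
    have h1 := hD (x, v) ⟨hx, mem_univ v⟩
    have h2 := hasFDerivAt_prodMk_right (𝕜 := ℝ) x v
    exact h1.comp v h2
  have hfderiv_eq : ∀ x ∈ U, ∀ v : F,
      fderiv ℝ (L x) v = (fderiv ℝ Lp (x, v)).comp (ContinuousLinearMap.inr ℝ E F) :=
    fun x hx v => (hpart x hx v).fderiv
  -- bound on the derivative over K × closedBall 0 C
  have hfc : ContinuousOn (fderiv ℝ Lp) Ω :=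
    hC2.continuousOn_fderiv_of_isOpen hΩ one_le_two
  set S : Set (E × F) := K ×ˢ Metric.closedBall (0 : F) C with hSdef
  have hScomp : IsCompact S := hK.prod (isCompact_closedBall 0 C)
  have hSsub : S ⊆ Ω := prod_mono hKU (subset_univ _)
  obtain ⟨M₀, hM₀⟩ := hScomp.exists_bound_of_continuousOn (hfc.mono hSsub)
  set M : ℝ := max M₀ 0 with hMdef
  have hM : ∀ p ∈ S, ‖fderiv ℝ Lp p‖ ≤ M := fun p hp => (hM₀ p hp).trans (le_max_left _ _)
  have hMnn : (0:ℝ) ≤ M := le_max_right _ _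
  -- derivative bound pointwise
  have hDbound : ∀ x ∈ K, ∀ v : F, ‖v‖ ≤ C → ∀ u : F,
      (fderiv ℝ (L x) v) u ≤ M * ‖u‖ := by
    intro x hx v hv u
    rw [hfderiv_eq x (hKU hx) v]
    have hmem : ((x, v) : E × F) ∈ S := ⟨hx, by simpa [Metric.mem_closedBall, dist_zero_right] using hv⟩
    have h1 : ‖(fderiv ℝ Lp (x, v)) ((0 : E), u)‖ ≤ ‖fderiv ℝ Lp (x, v)‖ * ‖((0 : E), u)‖ :=
      (fderiv ℝ Lp (x, v)).le_opNorm _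
    have h2 : ‖((0 : E), u)‖ = ‖u‖ := by
      simp [Prod.norm_def]
      exact norm_nonneg u
    calc (fderiv ℝ Lp (x, v)).comp (ContinuousLinearMap.inr ℝ E F) u
        = (fderiv ℝ Lp (x, v)) ((0 : E), u) := rfl
      _ ≤ ‖(fderiv ℝ Lp (x, v)) ((0 : E), u)‖ := le_abs_self _
      _ ≤ ‖fderiv ℝ Lp (x, v)‖ * ‖u‖ := by rw [h2] at h1; exact h1
      _ ≤ M * ‖u‖ := by
          apply mul_le_mul_of_nonneg_right (hM _ hmem) (norm_nonneg u)
  -- superlinearity and upper bound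
  obtain ⟨C₁, hC₁⟩ := hsl (M + 1) (by linarith)
  obtain ⟨A, hA⟩ := hbd C hC
  set R₀ : ℝ := max (A + M * C - C₁) 1 with hR₀def
  have hR₀pos : (0:ℝ) < R₀ := lt_of_lt_of_le one_pos (le_max_right _ _)
  -- uniform continuity part
  obtain ⟨δ₀, hδ₀pos, hδ₀⟩ := hK.exists_cthickening_subset_open hU hKU
  set K' : Set E := Metric.cthickening δ₀ K with hK'def
  have hK'comp : IsCompact K' := hK.cthickening
  set T : Set (E × F) := K' ×ˢ Metric.closedBall (0 : F) R₀ with hTdef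
  have hTcomp : IsCompact T := hK'comp.prod (isCompact_closedBall 0 R₀)
  have hTsub : T ⊆ Ω := prod_mono hδ₀ (subset_univ _)
  have hLcont : ContinuousOn Lp Ω := hC2.continuousOn
  have huc : UniformContinuousOn Lp T :=
    hTcomp.uniformContinuousOn_of_continuous (hLcont.mono hTsub)
  obtain ⟨δ₁, hδ₁pos, hδ₁⟩ := (Metric.uniformContinuousOn_iff.mp huc) ε hε
  refine ⟨min δ₀ (δ₁ / 2), lt_min hδ₀pos (by linarith), ?_⟩
  intro x hxK y hyU hxy v hvC w
  have hxU : x ∈ U := hKU hxK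
  -- tangent plane inequality at x
  have htan : L x v + (fderiv ℝ (L x) v) (w - v) ≤ L x w := by
    have hdiff := hpart x hxU v
    rw [hfderiv_eq x hxU v]
    exact tangent_le_of_convex (hconv x hxU) v w hdiff
  rcases le_or_gt ‖w‖ R₀ with hwle | hwgt
  · -- use uniform continuity
    have hxT : ((x, w) : E × F) ∈ T :=
      ⟨Metric.self_subset_cthickening K hxK, by simpa [Metric.mem_closedBall, dist_zero_right] using hwle⟩
    have hyK' : y ∈ K' := by
      apply Metric.mem_cthickening_of_dist_le y x δ₀ K hxK
      rw [dist_eq_norm]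
      calc ‖y - x‖ = ‖x - y‖ := by rw [norm_sub_rev]
        _ ≤ min δ₀ (δ₁ / 2) := hxy
        _ ≤ δ₀ := min_le_left _ _
    have hyT : ((y, w) : E × F) ∈ T :=
      ⟨hyK', by simpa [Metric.mem_closedBall, dist_zero_right] using hwle⟩
    have hdist : dist ((x, w) : E × F) ((y, w) : E × F) < δ₁ := by
      rw [Prod.dist_eq]
      simp only [dist_self]
      have : dist x y ≤ δ₁ / 2 := by
        rw [dist_eq_norm]; exact hxy.trans (min_le_right _ _)
      calc max (dist x y) 0 ≤ δ₁ / 2 := max_le this (by linarith)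
        _ < δ₁ := by linarith
    have := hδ₁ _ hxT _ hyT hdist
    rw [Real.dist_eq] at this
    have hnear : L x w - L y w < ε := (le_abs_self _).trans_lt this
    have hnear' : L x w - ε ≤ L y w := by
      linarith
    linarith [htan, hnear']
  · -- large w: superlinearity dominates
    have h1 : (M + 1) * ‖w‖ + C₁ ≤ L y w := hC₁ y hyU w
    have h2 : L x v ≤ A := hA x hxU v hvC
    have h3 : (fderiv ℝ (L x) v) (w - v) ≤ M * ‖w - v‖ := hDbound x hxK v hvC (w - v)
    have h4 : ‖w - v‖ ≤ ‖w‖ + C := (norm_sub_le w v).trans (by linarith)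
    have h5 : A + M * C - C₁ ≤ ‖w‖ := (le_max_left _ _).trans hwgt.le
    have h6 : M * ‖w - v‖ ≤ M * (‖w‖ + C) := mul_le_mul_of_nonneg_left h4 hMnn
    nlinarith [norm_nonneg w, hε]
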